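/- Let hol ⊂ so(2,4) be the set of 6×6 matrices of the form [[h₅,-h₆,h₂,-h₁,h₈,0],[h₆,h₅,h₁,h₂,0,-h₈],[h₃,-h₄,0,2h₆,-h₁,-h₂],[h₄,h₃,-2h₆,0,-h₂,h₁],[h₇,0,h₄,-h₃,-h₅,h₆],[0,-h₇,-h₃,-h₄,-h₆,-h₅]] for h₁,...,h₈ ∈ ℝ. Then hol is a Lie subalgebra of so(2,4) (closed under the commutator) and is isomorphic to su(2,1). -/

import Mathlib

open Matrix

/-- The parametrization of the holonomy algebra hol ⊂ so(2,4),
h₁,...,h₈ = h 0,...,h 7. -/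
noncomputable def hmat (h : Fin 8 → ℝ) : Matrix (Fin 6) (Fin 6) ℝ :=
  !![h 4, -h 5, h 1, -h 0, h 7, 0;
     h 5, h 4, h 0, h 1, 0, -h 7;
     h 2, -h 3, 0, 2 * h 5, -h 0, -h 1;
     h 3, h 2, -2 * h 5, 0, -h 1, h 0;
     h 6, 0, h 3, -h 2, -h 4, h 5;
     0, -h 6, -h 2, -h 3, -h 5, -h 4]

/-- The defining form of so(2,4) in the paper's (1,1,2,1,1)-antidiagonal-block
conventions (p = 1, q = 3). -/
noncomputable def bg6 : Matrix (Fin 6) (Fin 6) ℝ :=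
  !![0, 0, 0, 0, 0, 1;
     0, 0, 0, 0, 1, 0;
     0, 0, 1, 0, 0, 0;
     0, 0, 0, 1, 0, 0;
     0, 1, 0, 0, 0, 0;
     1, 0, 0, 0, 0, 0]

/-- A Hermitian form of signature (2,1). -/
noncomputable def hform : Matrix (Fin 3) (Fin 3) ℂ :=
  !![1, 0, 0; 0, 1, 0; 0, 0, -1]

/-! ### Auxiliary definitions and lemmas -/

@[simp] lemma cons_val_five' {α} {m : ℕ} (x : α) (u : Fin (m+5) → α) :
    Matrix.vecCons x u 5 =
      Matrix.vecHead (Matrix.vecTail (Matrix.vecTail (Matrix.vecTail (Matrix.vecTail u)))) :=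
  rfl

@[simp] lemma cons_val_six' {α} {m : ℕ} (x : α) (u : Fin (m+6) → α) :
    Matrix.vecCons x u 6 =
      Matrix.vecHead (Matrix.vecTail (Matrix.vecTail (Matrix.vecTail
        (Matrix.vecTail (Matrix.vecTail u))))) :=
  rfl

@[simp] lemma cons_val_seven' {α} {m : ℕ} (x : α) (u : Fin (m+7) → α) :
    Matrix.vecCons x u 7 =
      Matrix.vecHead (Matrix.vecTail (Matrix.vecTail (Matrix.vecTail
        (Matrix.vecTail (Matrix.vecTail (Matrix.vecTail u)))))) :=
  rfl

/-- The bracket on the parameter space induced by the matrix bracket of `hmat`. -/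
noncomputable def cbr (a b : Fin 8 → ℝ) : Fin 8 → ℝ :=
  ![a 4 * b 0 - a 0 * b 4 + 3 * (a 5 * b 1 - a 1 * b 5) + a 7 * b 2 - a 2 * b 7,
    a 4 * b 1 - a 1 * b 4 - 3 * (a 5 * b 0 - a 0 * b 5) + a 7 * b 3 - a 3 * b 7,
    a 2 * b 4 - a 4 * b 2 - 3 * (a 3 * b 5 - a 5 * b 3) + a 6 * b 0 - a 0 * b 6,
    a 3 * b 4 - a 4 * b 3 + 3 * (a 2 * b 5 - a 5 * b 2) + a 6 * b 1 - a 1 * b 6,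
    a 1 * b 2 - a 2 * b 1 + a 3 * b 0 - a 0 * b 3 + a 7 * b 6 - a 6 * b 7,
    a 0 * b 2 - a 2 * b 0 + a 1 * b 3 - a 3 * b 1,
    2 * (a 6 * b 4 - a 4 * b 6) + 2 * (a 3 * b 2 - a 2 * b 3),
    2 * (a 4 * b 7 - a 7 * b 4) + 2 * (a 0 * b 1 - a 1 * b 0)]

open Complex in
/-- The isomorphism of hol with su(2,1). -/
noncomputable def fdef (h : Fin 8 → ℝ) : Matrix (Fin 3) (Fin 3) ℂ :=
  !![(h 5 + h 6 - h 7 / 4) * I, (h 0 / 2 + h 3) + (h 2 - h 1 / 2) * I, h 4 + (h 6 + h 7 / 4) * I;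
     (-(h 0 / 2) - h 3) + (h 2 - h 1 / 2) * I, -2 * h 5 * I, (h 0 / 2 - h 3) + (h 2 + h 1 / 2) * I;
     h 4 - (h 6 + h 7 / 4) * I, (h 0 / 2 - h 3) - (h 2 + h 1 / 2) * I, (h 5 - h 6 + h 7 / 4) * I]

/-- A left inverse for `fdef`. -/
noncomputable def ginv (X : Matrix (Fin 3) (Fin 3) ℂ) : Fin 8 → ℝ :=
  ![(X 0 1).re + (X 1 2).re,
    (X 1 2).im - (X 0 1).im,
    ((X 0 1).im + (X 1 2).im) / 2,
    ((X 0 1).re - (X 1 2).re) / 2,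
    (X 0 2).re,
    -(X 1 1).im / 2,
    ((X 0 2).im + (X 0 0).im + (X 1 1).im / 2) / 2,
    2 * ((X 0 2).im - (X 0 0).im - (X 1 1).im / 2)]

lemma hmat_inj : Function.Injective hmat := by
  intro h h' H
  funext i
  fin_cases i
  · have := congrFun (congrFun H 1) 2; simpa [hmat] using this
  · have := congrFun (congrFun H 0) 2; simpa [hmat] using this
  · have := congrFun (congrFun H 2) 0; simpa [hmat] using this
  · have := congrFun (congrFun H 3) 0; simpa [hmat] using this
  · have := congrFun (congrFun H 0) 0; simpa [hmat] using this
  · have := congrFun (congrFun H 1) 0; simpa [hmat] using this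
  · have := congrFun (congrFun H 4) 0; simpa [hmat] using this
  · have := congrFun (congrFun H 0) 4; simpa [hmat] using this

set_option maxHeartbeats 1000000 in
lemma hmat_so24 (h : Fin 8 → ℝ) : (hmat h)ᵀ * bg6 + bg6 * hmat h = 0 := by
  ext i j
  fin_cases i <;> fin_cases j <;>
  · simp [Matrix.mul_apply, Fin.sum_univ_six, hmat, bg6]

set_option maxHeartbeats 4000000 in
lemma hmat_br (h h' : Fin 8 → ℝ) :
    hmat h * hmat h' - hmat h' * hmat h = hmat (cbr h h') := by
  ext i j
  fin_cases i <;> fin_cases j <;>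
  · simp only [Matrix.sub_apply, Matrix.mul_apply, Fin.sum_univ_six]
    norm_num [hmat, Matrix.vecHead, Matrix.vecTail]
    try simp only [cbr, Matrix.cons_val_zero, Matrix.cons_val_one, Matrix.cons_val_two,
      Matrix.cons_val_three, Matrix.cons_val_four, cons_val_five', cons_val_six',
      cons_val_seven', Matrix.cons_val_succ, Matrix.head_cons, Matrix.vecHead, Matrix.vecTail,
      Function.comp_apply]
    try ring

set_option maxHeartbeats 1000000 in
lemma fdef_br (a b : Fin 8 → ℝ) : fdef (cbr a b) = fdef a * fdef b - fdef b * fdef a := by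
  ext i j
  fin_cases i <;> fin_cases j <;>
  · simp only [Matrix.sub_apply, Matrix.mul_apply, Fin.sum_univ_three]
    simp [fdef, cbr, Matrix.vecHead, Matrix.vecTail, Complex.ext_iff]
    constructor <;> ring

set_option maxHeartbeats 1000000 in
lemma fdef_linear : IsLinearMap ℝ fdef := by
  constructor
  · intro x y
    ext i j
    fin_cases i <;> fin_cases j <;>
    · simp [fdef, Matrix.add_apply, Pi.add_apply, Complex.ext_iff, Matrix.vecHead,
        Matrix.vecTail]
      try constructor
      all_goals try push_cast
      all_goals ring
  · intro c x
    ext i j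
    fin_cases i <;> fin_cases j <;>
    · simp [fdef, Matrix.smul_apply, Pi.smul_apply, smul_eq_mul, Complex.real_smul,
        Complex.ext_iff, Matrix.vecHead, Matrix.vecTail]
      try constructor
      all_goals try push_cast
      all_goals ring

set_option maxHeartbeats 1000000 in
lemma ginv_fdef (h : Fin 8 → ℝ) : ginv (fdef h) = h := by
  funext i
  fin_cases i <;>
  · simp [ginv, fdef, Matrix.vecHead, Matrix.vecTail]
    try ring

set_option maxHeartbeats 1000000 in
lemma fdef_su (h : Fin 8 → ℝ) : (fdef h)ᴴ * hform + hform * fdef h = 0 := by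
  ext i j
  fin_cases i <;> fin_cases j <;>
  · simp only [Matrix.add_apply, Matrix.mul_apply, Matrix.conjTranspose_apply,
      Fin.sum_univ_three, Matrix.zero_apply]
    simp [fdef, hform, Matrix.vecHead, Matrix.vecTail, Complex.ext_iff]
    try constructor
    all_goals ring

lemma fdef_trace (h : Fin 8 → ℝ) : Matrix.trace (fdef h) = 0 := by
  rw [Matrix.trace_fin_three]
  simp [fdef, Matrix.vecHead, Matrix.vecTail]
  ring

set_option maxHeartbeats 1000000 in
lemma fdef_surj (X : Matrix (Fin 3) (Fin 3) ℂ) (hX : Xᴴ * hform + hform * X = 0)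
    (htr : Matrix.trace X = 0) : fdef (ginv X) = X := by
  have e : ∀ i j, (Xᴴ * hform + hform * X) i j = 0 := fun i j => by rw [hX]; rfl
  have r00 := e 0 0
  have r01 := e 0 1
  have r02 := e 0 2
  have r11 := e 1 1
  have r12 := e 1 2
  have r22 := e 2 2
  simp only [Matrix.add_apply, Matrix.mul_apply, Matrix.conjTranspose_apply, Fin.sum_univ_three,
    Matrix.zero_apply, hform, Matrix.of_apply, Matrix.cons_val_zero, Matrix.cons_val_one,
    Matrix.cons_val_two, Matrix.head_cons, Matrix.cons_val_succ, Complex.star_def,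
    Matrix.vecHead, Matrix.vecTail, Function.comp_apply,
    Complex.ext_iff, Complex.add_re, Complex.add_im, Complex.mul_re, Complex.mul_im,
    Complex.conj_re, Complex.conj_im, Complex.one_re, Complex.one_im, Complex.zero_re,
    Complex.zero_im, Complex.neg_re, Complex.neg_im, mul_zero, zero_mul, mul_one, one_mul,
    add_zero, zero_add, neg_zero, neg_neg, mul_neg, neg_mul] at r00 r01 r02 r11 r12 r22
  rw [Matrix.trace_fin_three, Complex.ext_iff] at htr
  simp only [Complex.add_re, Complex.add_im, Complex.zero_re, Complex.zero_im] at htr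
  ext i j
  fin_cases i <;> fin_cases j <;>
  · simp [fdef, ginv, Matrix.vecHead, Matrix.vecTail, Complex.ext_iff]
    try constructor
    all_goals
      linarith [r00.1, r00.2, r01.1, r01.2, r02.1, r02.2, r11.1, r11.2, r12.1, r12.2,
        r22.1, r22.2, htr.1, htr.2]

/-- hol is an 8-dimensional Lie subalgebra of so(2,4) isomorphic to su(2,1). -/
theorem hol_subalgebra_iso_su21 :
    Function.Injective hmat ∧
    (∀ h, (hmat h)ᵀ * bg6 + bg6 * hmat h = 0) ∧
    (∀ h h', ∃ h'', hmat h * hmat h' - hmat h' * hmat h = hmat h'') ∧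
    ∃ f : (Fin 8 → ℝ) → Matrix (Fin 3) (Fin 3) ℂ,
      IsLinearMap ℝ f ∧ Function.Injective f ∧
      (∀ h, (f h)ᴴ * hform + hform * f h = 0 ∧ Matrix.trace (f h) = 0) ∧
      (∀ X : Matrix (Fin 3) (Fin 3) ℂ,
        Xᴴ * hform + hform * X = 0 → Matrix.trace X = 0 → ∃ h, f h = X) ∧
      (∀ h h' h'', hmat h'' = hmat h * hmat h' - hmat h' * hmat h →
        f h'' = f h * f h' - f h' * f h) := by
  refine ⟨hmat_inj, hmat_so24, fun h h' => ⟨cbr h h', hmat_br h h'⟩,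
    fdef, fdef_linear, Function.LeftInverse.injective ginv_fdef,
    fun h => ⟨fdef_su h, fdef_trace h⟩,
    fun X hX htr => ⟨ginv X, fdef_surj X hX htr⟩, ?_⟩
  intro h h' h'' H
  have : hmat h'' = hmat (cbr h h') := by rw [H, hmat_br]
  rw [hmat_inj this, fdef_br]
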